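/- The equilibrium system in (x̄, ρ̄, ε̄, λ̄, ū, π̄, ν̄, μ̄) ∈ ℝ^N × ℝ^N × ℝ^N × ℝ × ℝ^N × ℝ^N × ℝ × ℝ given by: 0 = −qᵢ·x̄ᵢ − c₀ᵢ − ρ̄ᵢ − ūᵢ for all i; 0 = x̄ᵢ − aᵢ − ε̄ᵢ for all i; 0 = ρ̄ᵢ − λ̄ for all i; 0 = Σᵢ ε̄ᵢ; 0 = −ūᵢ/qᵢ − qᵢ·π̄ᵢ − x̄ᵢ − (c₀ᵢ + λmax)/qᵢ for all i; 0 = qᵢ·ūᵢ − ν̄ for all i; 0 = Σᵢ π̄ᵢ + μ̄; ν̄ ≥ 0; μ̄ ≥ 0; ν̄·μ̄ = 0, has exactly one solution. -/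

import Mathlib

private lemma lcp_unique (S1 S2 A L : ℝ) (h1 : 0 < S1) (h2 : 0 < S2) :
    ∃! p : ℝ × ℝ, p.1 * S1 + p.2 * S2 = -A ∧ 0 ≤ p.2 ∧ p.1 ≤ L ∧ p.2 * (L - p.1) = 0 := by
  have h1' := h1.ne'
  have h2' := h2.ne'
  apply existsUnique_of_exists_of_unique
  · rcases le_or_gt (-A - L * S1) 0 with h | h
    · refine ⟨(-A / S1, 0), by field_simp; ring, le_refl 0, ?_, by ring⟩
      rw [div_le_iff₀ h1]; linarith
    · refine ⟨(L, (-A - L * S1) / S2), ?_, by positivity, le_refl L, by simp⟩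
      field_simp; ring
  · rintro ⟨l1, n1⟩ ⟨l2, n2⟩ ⟨he1, hn1, hl1, hc1⟩ ⟨he2, hn2, hl2, hc2⟩
    have key : ∀ l1 n1 l2 n2 : ℝ, l1 * S1 + n1 * S2 = -A → 0 ≤ n1 → l1 ≤ L →
        n1 * (L - l1) = 0 → l2 * S1 + n2 * S2 = -A → 0 ≤ n2 → l2 ≤ L → ¬ (l1 < l2) := by
      intro l1 n1 l2 n2 he1 hn1 hl1 hc1 he2 hn2 hl2' hlt
      have hn1' : n1 = 0 := by
        rcases mul_eq_zero.1 hc1 with h | h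
        · exact h
        · nlinarith
      nlinarith
    have hl : l1 = l2 := by
      rcases lt_trichotomy l1 l2 with h | h | h
      · exact absurd h (key l1 n1 l2 n2 he1 hn1 hl1 hc1 he2 hn2 hl2)
      · exact h
      · exact absurd h (key l2 n2 l1 n1 he2 hn2 hl2 hc2 he1 hn1 hl1)
    have hn : n1 = n2 := by
      rw [hl] at he1
      have : n1 * S2 = n2 * S2 := by linarith
      exact mul_right_cancel₀ h2' this
    simp [Prod.ext_iff, hl, hn]

/-- The closed-loop system admits exactly one equilibrium
`(x̄, ρ̄, ε̄, λ̄, ū, π̄, ν̄, μ̄)`. -/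
theorem stmt_13 (N : ℕ) (hN : 0 < N) (q c₀ a : Fin N → ℝ) (hq : ∀ i, 0 < q i)
    (lamMax : ℝ) :
    ∃! p : (Fin N → ℝ) × (Fin N → ℝ) × (Fin N → ℝ) × ℝ ×
        (Fin N → ℝ) × (Fin N → ℝ) × ℝ × ℝ,
      (∀ i, 0 = -(q i * p.1 i) - c₀ i - p.2.1 i - p.2.2.2.2.1 i) ∧
      (∀ i, 0 = p.1 i - a i - p.2.2.1 i) ∧
      (∀ i, 0 = p.2.1 i - p.2.2.2.1) ∧
      (0 = ∑ i, p.2.2.1 i) ∧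
      (∀ i, 0 = -(p.2.2.2.2.1 i) / q i - q i * p.2.2.2.2.2.1 i - p.1 i
          - (c₀ i + lamMax) / q i) ∧
      (∀ i, 0 = q i * p.2.2.2.2.1 i - p.2.2.2.2.2.2.1) ∧
      (0 = (∑ i, p.2.2.2.2.2.1 i) + p.2.2.2.2.2.2.2) ∧
      0 ≤ p.2.2.2.2.2.2.1 ∧ 0 ≤ p.2.2.2.2.2.2.2 ∧
      p.2.2.2.2.2.2.1 * p.2.2.2.2.2.2.2 = 0 := by
  have hq' : ∀ i, q i ≠ 0 := fun i => (hq i).ne'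
  have : Nonempty (Fin N) := Fin.pos_iff_nonempty.mp hN
  set S1 := ∑ i, (q i)⁻¹ with hS1
  set S2 := ∑ i, ((q i) ^ 2)⁻¹ with hS2
  set A := ∑ i, (a i + c₀ i / q i) with hA
  have hS1pos : 0 < S1 := Finset.sum_pos (fun i _ => inv_pos.mpr (hq i)) Finset.univ_nonempty
  have hS2pos : 0 < S2 := Finset.sum_pos (fun i _ => inv_pos.mpr (pow_pos (hq i) 2)) Finset.univ_nonempty
  obtain ⟨⟨lam, nu⟩, ⟨heq, hnu, hlam, hcomp⟩, huniq⟩ := lcp_unique S1 S2 A lamMax hS1pos hS2pos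
  simp only at heq hnu hlam hcomp
  -- the sum identity used for eq4
  have hsum : ∀ (l n : ℝ), ∑ i, ((-c₀ i - l) / q i - n / (q i) ^ 2 - a i)
      = -A - (l * S1 + n * S2) := by
    intro l n
    calc ∑ i, ((-c₀ i - l) / q i - n / (q i) ^ 2 - a i)
        = ∑ i, -((a i + c₀ i / q i) + (l * (q i)⁻¹ + n * ((q i) ^ 2)⁻¹)) :=
          Finset.sum_congr rfl (fun i _ => by have := hq' i; field_simp; ring)
      _ = -A - (l * S1 + n * S2) := by
          simp only [Finset.sum_neg_distrib, Finset.sum_add_distrib, ← Finset.mul_sum,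
            div_eq_mul_inv, hA, hS1, hS2]
          ring
  have hsumπ : ∀ (l : ℝ), ∑ i, (l - lamMax) / (q i) ^ 2 = (l - lamMax) * S2 := by
    intro l
    rw [hS2, Finset.mul_sum]
    exact Finset.sum_congr rfl (fun i _ => by rw [div_eq_mul_inv])
  refine ⟨(fun i => (-c₀ i - lam) / q i - nu / (q i) ^ 2,
           fun _ => lam,
           fun i => (-c₀ i - lam) / q i - nu / (q i) ^ 2 - a i,
           lam,
           fun i => nu / q i,
           fun i => (lam - lamMax) / (q i) ^ 2,
           nu,
           (lamMax - lam) * S2), ⟨?_, ?_, ?_, ?_, ?_, ?_, ?_, ?_, ?_, ?_⟩, ?_⟩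
  · intro i; field_simp [hq' i]; ring
  · intro i; ring
  · intro i; ring
  · rw [hsum lam nu, heq]; ring
  · intro i; field_simp [hq' i]; ring
  · intro i; field_simp [hq' i]; ring
  · rw [hsumπ lam]; ring
  · exact hnu
  · exact mul_nonneg (by linarith) hS2pos.le
  · rw [← mul_assoc, hcomp, zero_mul]
  · rintro ⟨x', ρ', ε', lam', u', π', nu', mu'⟩ ⟨h1, h2, h3, h4, h5, h6, h7, h8, h9, h10⟩
    replace h1 : ∀ i, (0:ℝ) = -(q i * x' i) - c₀ i - ρ' i - u' i := h1
    replace h2 : ∀ i, (0:ℝ) = x' i - a i - ε' i := h2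
    replace h3 : ∀ i, (0:ℝ) = ρ' i - lam' := h3
    replace h4 : (0:ℝ) = ∑ i, ε' i := h4
    replace h5 : ∀ i, (0:ℝ) = -u' i / q i - q i * π' i - x' i - (c₀ i + lamMax) / q i := h5
    replace h6 : ∀ i, (0:ℝ) = q i * u' i - nu' := h6
    replace h7 : (0:ℝ) = (∑ i, π' i) + mu' := h7
    replace h8 : (0:ℝ) ≤ nu' := h8
    replace h9 : (0:ℝ) ≤ mu' := h9
    replace h10 : nu' * mu' = 0 := h10
    have hρ : ∀ i, ρ' i = lam' := fun i => by linarith [h3 i]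
    have hu : ∀ i, u' i = nu' / q i := fun i => by
      have := h6 i; field_simp [hq' i]; linarith
    have hx : ∀ i, x' i = (-c₀ i - lam') / q i - nu' / (q i) ^ 2 := by
      intro i
      have := h1 i
      rw [hρ i, hu i] at this
      field_simp [hq' i] at this ⊢
      linear_combination this
    have hπ : ∀ i, π' i = (lam' - lamMax) / (q i) ^ 2 := by
      intro i
      have := h5 i
      rw [hu i, hx i] at this
      field_simp [hq' i] at this
      rw [eq_div_iff (pow_ne_zero 2 (hq' i))]
      apply mul_left_cancel₀ (pow_ne_zero 5 (hq' i))
      linear_combination (q i) ^ 4 * this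
    have hε : ∀ i, ε' i = x' i - a i := fun i => by linarith [h2 i]
    have hmu : mu' = (lamMax - lam') * S2 := by
      have : ∑ i, π' i = (lam' - lamMax) * S2 := by
        rw [← hsumπ lam']
        exact Finset.sum_congr rfl (fun i _ => hπ i)
      rw [this] at h7
      linarith
    have heq' : lam' * S1 + nu' * S2 = -A := by
      have h4' : (0 : ℝ) = ∑ i, ((-c₀ i - lam') / q i - nu' / (q i) ^ 2 - a i) := by
        rw [h4]
        exact Finset.sum_congr rfl (fun i _ => by rw [hε i, hx i])
      rw [hsum lam' nu'] at h4'
      linarith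
    have hlam' : lam' ≤ lamMax := by nlinarith [hmu ▸ h9]
    have hcomp' : nu' * (lamMax - lam') = 0 := by
      rw [hmu, ← mul_assoc] at h10
      rcases mul_eq_zero.1 h10 with h | h
      · exact h
      · exact absurd h hS2pos.ne'
    have hkey := huniq (lam', nu') ⟨heq', h8, hlam', hcomp'⟩
    rw [Prod.mk.injEq] at hkey
    obtain ⟨hl, hn⟩ := hkey
    simp only [Prod.mk.injEq]
    refine ⟨funext fun i => ?_, funext fun i => ?_, funext fun i => ?_, hl,
      funext fun i => ?_, funext fun i => ?_, hn, ?_⟩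
    · rw [hx i, hl, hn]
    · rw [hρ i, hl]
    · rw [hε i, hx i, hl, hn]
    · rw [hu i, hn]
    · rw [hπ i, hl]
    · rw [hmu, hl]
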